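/- For all x ∈ R^n with n ≥ 2, any orthonormal basis (e_1,...,e_n) of R^n, and any c ≥ 0, letting V = {±e_2,...,±e_n}, we have max over e ∈ V of |x^T(e + c·e_1)| ≥ sqrt((x^T x − (x^T e_1)^2)/(n−1)) + c·|x^T e_1|. -/

import Mathlib

open scoped RealInnerProductSpace

/-- For `n ≥ 2`, any orthonormal basis `(e i₀ = e_1, …)` of `ℝⁿ` (with `i₀` the first index),
any `c ≥ 0` and `x ∈ ℝⁿ`, the maximum over `e' ∈ V = {±e i : i ≠ i₀}` of `|xᵀ(e' + c • e i₀)|`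
is at least `√((‖x‖² − ⟪x, e i₀⟫²)/(n−1)) + c * |⟪x, e i₀⟫|` (max ≥ bound stated as an
existential). -/
theorem stmt1 (n : ℕ) (hn : 2 ≤ n)
    (e : Fin n → EuclideanSpace ℝ (Fin n)) (he : Orthonormal ℝ e)
    (hspan : Submodule.span ℝ (Set.range e) = ⊤)
    (i₀ : Fin n) (hi₀ : (i₀ : ℕ) = 0)
    (c : ℝ) (hc : 0 ≤ c) (x : EuclideanSpace ℝ (Fin n)) :
    ∃ i : Fin n, i ≠ i₀ ∧ ∃ s : ℝ, (s = 1 ∨ s = -1) ∧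
      |⟪x, s • e i + c • e i₀⟫| ≥
        Real.sqrt ((‖x‖^2 - ⟪x, e i₀⟫^2) / (n - 1)) + c * |⟪x, e i₀⟫| := by
  -- build an orthonormal basis
  set bas : Module.Basis (Fin n) ℝ (EuclideanSpace ℝ (Fin n)) :=
    Module.Basis.mk he.linearIndependent hspan.ge with hbas
  have hco : ⇑bas = e := Module.Basis.coe_mk _ _
  have he' : Orthonormal ℝ bas := by rwa [hco]
  set b : OrthonormalBasis (Fin n) ℝ (EuclideanSpace ℝ (Fin n)) :=
    bas.toOrthonormalBasis he' with hb
  have hbe : ∀ i, b i = e i := by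
    intro i
    rw [hb, Module.Basis.coe_toOrthonormalBasis, hco]
  -- Parseval
  have parseval : ∑ i, ⟪x, e i⟫ ^ 2 = ‖x‖ ^ 2 := by
    have := b.sum_inner_mul_inner x x
    simp only [hbe] at this
    rw [real_inner_self_eq_norm_sq] at this
    rw [← this]
    congr 1; ext i
    rw [sq, real_inner_comm (e i) x]
  set a := ⟪x, e i₀⟫ with ha
  have hsum : ∑ i ∈ Finset.univ.erase i₀, ⟪x, e i⟫ ^ 2 = ‖x‖ ^ 2 - a ^ 2 := by
    have h := Finset.add_sum_erase Finset.univ (fun i => ⟪x, e i⟫ ^ 2)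
      (Finset.mem_univ i₀)
    rw [parseval] at h
    linarith
  have hcard : (Finset.univ.erase i₀).card = n - 1 := by
    rw [Finset.card_erase_of_mem (Finset.mem_univ i₀), Finset.card_univ, Fintype.card_fin]
  have hne : (Finset.univ.erase i₀).Nonempty := by
    rw [← Finset.card_pos, hcard]; omega
  have hn1 : ((n : ℝ) - 1) = ((Finset.univ.erase i₀).card : ℝ) := by
    rw [hcard]; push_cast [Nat.cast_sub (by omega : 1 ≤ n)]; ring
  -- pigeonhole
  obtain ⟨i, hi, hile⟩ : ∃ i ∈ Finset.univ.erase i₀,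
      (‖x‖ ^ 2 - a ^ 2) / (n - 1) ≤ ⟪x, e i⟫ ^ 2 := by
    apply Finset.exists_le_of_sum_le hne
    rw [hsum, Finset.sum_const, nsmul_eq_mul, ← hn1]
    rw [mul_div_cancel₀]
    have h1 : (2 : ℝ) ≤ n := by exact_mod_cast hn
    intro h
    linarith
  refine ⟨i, Finset.ne_of_mem_erase hi, ?_⟩
  set v := ⟪x, e i⟫ with hv
  have hsqrt : Real.sqrt ((‖x‖ ^ 2 - a ^ 2) / (n - 1)) ≤ |v| := by
    rw [← Real.sqrt_sq_eq_abs]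
    exact Real.sqrt_le_sqrt hile
  have hinner : ∀ s : ℝ, ⟪x, s • e i + c • e i₀⟫ = s * v + c * a := by
    intro s
    rw [inner_add_right, real_inner_smul_right, real_inner_smul_right]
  have hca1 : 0 ≤ c * a ∨ c * a ≤ 0 := by
    rcases le_or_gt 0 a with h | h
    · exact Or.inl (mul_nonneg hc h)
    · exact Or.inr (by nlinarith)
  rcases le_or_gt 0 a with hA | hA <;> rcases le_or_gt 0 v with hV | hV
  · have hca : 0 ≤ c * a := mul_nonneg hc hA
    refine ⟨1, Or.inl rfl, ?_⟩
    rw [hinner 1, one_mul, abs_of_nonneg (by linarith : (0:ℝ) ≤ v + c * a),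
      abs_of_nonneg hA]
    rw [abs_of_nonneg hV] at hsqrt
    linarith
  · have hca : 0 ≤ c * a := mul_nonneg hc hA
    refine ⟨-1, Or.inr rfl, ?_⟩
    rw [hinner (-1), neg_one_mul, abs_of_nonneg (by linarith : (0:ℝ) ≤ -v + c * a),
      abs_of_nonneg hA]
    rw [abs_of_neg hV] at hsqrt
    linarith
  · have hca : 0 ≤ c * (-a) := mul_nonneg hc (by linarith)
    refine ⟨-1, Or.inr rfl, ?_⟩
    rw [hinner (-1), neg_one_mul, abs_of_nonpos (by linarith : -v + c * a ≤ 0),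
      abs_of_neg hA]
    rw [abs_of_nonneg hV] at hsqrt
    linarith
  · have hca : 0 ≤ c * (-a) := mul_nonneg hc (by linarith)
    refine ⟨1, Or.inl rfl, ?_⟩
    rw [hinner 1, one_mul, abs_of_nonpos (by linarith : v + c * a ≤ 0),
      abs_of_neg hA]
    rw [abs_of_neg hV] at hsqrt
    linarith
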